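/- Let 0 < β ≤ β_c = log 4 and K_c^{(2)}(β) = (e^β + 2)/(4β). Then: (a) for 0 < K ≤ K_c^{(2)}(β), the set of global minimum points of G_{β,K} on ℝ is {0}; (b) for K > K_c^{(2)}(β), there exists z(β,K) > 0 such that the set of global minimum points of G_{β,K} on ℝ is {z(β,K), −z(β,K)}; (c) the function K ↦ z(β,K) is positive, increasing, and continuous on (K_c^{(2)}(β), ∞), and z(β,K) → 0 as K → K_c^{(2)}(β)⁺ (continuous bifurcation). -/

import Mathlib

open Filter

noncomputable section

/-- Cumulant generating function
`c_β(t) = log[(1 + e^{−β}(e^t + e^{−t}))/(1 + 2e^{−β})]`. -/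
def cBC (β t : ℝ) : ℝ :=
  Real.log ((1 + Real.exp (-β) * (Real.exp t + Real.exp (-t))) / (1 + 2 * Real.exp (-β)))

/-- Free energy functional `G_{β,K}(z) = βKz² − c_β(2βKz)`. -/
def GBC (β K z : ℝ) : ℝ := β * K * z ^ 2 - cBC β (2 * β * K * z)

/-- Second-order critical curve `K_c^{(2)}(β) = (e^β + 2)/(4β)`. -/
def Kc2 (β : ℝ) : ℝ := (Real.exp β + 2) / (4 * β)

namespace BCaux

/-- Denominator `e^β + 2 cosh t`. -/
def Dd (β t : ℝ) : ℝ := Real.exp β + 2 * Real.cosh t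

/-- `φ = c_β'`. -/
def phi (β t : ℝ) : ℝ := 2 * Real.sinh t / Dd β t

def phiD (β t : ℝ) : ℝ := (2 * Real.exp β * Real.cosh t + 4) / (Dd β t) ^ 2

def phiDD (β t : ℝ) : ℝ :=
  2 * Real.sinh t * ((Real.exp β) ^ 2 - 2 * Real.exp β * Real.cosh t - 8) / (Dd β t) ^ 3

lemma Dd_pos (β t : ℝ) : 0 < Dd β t := by
  have h1 := Real.exp_pos β
  have h2 := Real.cosh_pos t
  unfold Dd; nlinarith

lemma phi_zero (β : ℝ) : phi β 0 = 0 := by simp [phi]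

lemma phi_pos (β : ℝ) {t : ℝ} (ht : 0 < t) : 0 < phi β t := by
  have hs : 0 < Real.sinh t := Real.sinh_pos_iff.2 ht
  exact div_pos (by positivity) (Dd_pos β t)

lemma phi_lt_one (β t : ℝ) : phi β t < 1 := by
  have h1 := Real.sinh_lt_cosh t
  have h2 := Real.exp_pos β
  rw [phi, div_lt_one (Dd_pos β t)]
  unfold Dd; nlinarith

lemma continuous_phi (β : ℝ) : Continuous (phi β) :=
  Continuous.div (continuous_const.mul Real.continuous_sinh)
    (continuous_const.add (continuous_const.mul Real.continuous_cosh))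
    (fun t => (Dd_pos β t).ne')

lemma cBC_eq (β t : ℝ) : cBC β t = Real.log (Dd β t) - Real.log (Real.exp β + 2) := by
  have ha : (0:ℝ) < Real.exp β := Real.exp_pos β
  have h2 : (0:ℝ) < Real.exp β + 2 := by linarith
  have harg : (1 + Real.exp (-β) * (Real.exp t + Real.exp (-t))) / (1 + 2 * Real.exp (-β))
      = Dd β t / (Real.exp β + 2) := by
    rw [Real.exp_neg]
    unfold Dd
    rw [Real.cosh_eq]
    field_simp
  rw [cBC, harg, Real.log_div (Dd_pos β t).ne' h2.ne']

lemma cBC_neg (β t : ℝ) : cBC β (-t) = cBC β t := by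
  unfold cBC
  rw [neg_neg, add_comm (Real.exp (-t))]

lemma hasDerivAt_Dd (β t : ℝ) : HasDerivAt (Dd β) (2 * Real.sinh t) t := by
  exact ((Real.hasDerivAt_cosh t).const_mul 2).const_add (Real.exp β)

lemma hasDerivAt_cBC (β t : ℝ) : HasDerivAt (cBC β) (phi β t) t := by
  have h : HasDerivAt (fun s => Real.log (Dd β s) - Real.log (Real.exp β + 2))
      (2 * Real.sinh t / Dd β t) t :=
    (((hasDerivAt_Dd β t).log (Dd_pos β t).ne')).sub_const _
  have he : cBC β = fun s => Real.log (Dd β s) - Real.log (Real.exp β + 2) :=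
    funext (cBC_eq β)
  rw [he]; exact h

lemma hasDerivAt_phi (β t : ℝ) : HasDerivAt (phi β) (phiD β t) t := by
  have hnum : HasDerivAt (fun s => 2 * Real.sinh s) (2 * Real.cosh t) t :=
    (Real.hasDerivAt_sinh t).const_mul 2
  have h := hnum.div (hasDerivAt_Dd β t) (Dd_pos β t).ne'
  refine h.congr_deriv ?_
  unfold phiD Dd
  have hc := Real.cosh_sq_sub_sinh_sq t
  congr 1
  linear_combination (4 : ℝ) * hc

lemma hasDerivAt_phiD (β t : ℝ) : HasDerivAt (phiD β) (phiDD β t) t := by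
  have hnum : HasDerivAt (fun s => 2 * Real.exp β * Real.cosh s + 4)
      (2 * Real.exp β * Real.sinh t) t :=
    (((Real.hasDerivAt_cosh t).const_mul (2 * Real.exp β))).add_const 4
  have hden : HasDerivAt (fun s => (Dd β s) ^ 2)
      ((2 : ℕ) * (Dd β t) ^ 1 * (2 * Real.sinh t)) t := (hasDerivAt_Dd β t).pow 2
  have h := hnum.div hden (pow_ne_zero 2 (Dd_pos β t).ne')
  refine h.congr_deriv ?_
  unfold phiDD Dd
  have hD : Real.exp β + 2 * Real.cosh t ≠ 0 := (Dd_pos β t).ne'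
  field_simp
  ring

lemma phiDD_neg {β : ℝ} (hβ4 : Real.exp β ≤ 4) {t : ℝ} (ht : 0 < t) : phiDD β t < 0 := by
  have hs : 0 < Real.sinh t := Real.sinh_pos_iff.2 ht
  have hc : 1 < Real.cosh t := Real.one_lt_cosh.2 ht.ne'
  have ha : 0 < Real.exp β := Real.exp_pos β
  have hD := Dd_pos β t
  have hX : Real.exp β ^ 2 - 2 * Real.exp β * Real.cosh t - 8 < 0 := by nlinarith
  apply div_neg_of_neg_of_pos
  · nlinarith [mul_pos hs (neg_pos.2 hX)]
  · positivity

lemma phi_strictMono (β : ℝ) : StrictMono (phi β) := by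
  apply strictMono_of_deriv_pos
  intro x
  rw [(hasDerivAt_phi β x).deriv]
  have hc := Real.cosh_pos x
  have ha := Real.exp_pos β
  have hD := Dd_pos β x
  apply div_pos
  · nlinarith
  · positivity

lemma phi_sconcave {β : ℝ} (hβ4 : Real.exp β ≤ 4) : StrictConcaveOn ℝ (Set.Ici 0) (phi β) := by
  apply strictConcaveOn_of_deriv2_neg (convex_Ici 0) (continuous_phi β).continuousOn
  intro x hx
  rw [interior_Ici] at hx
  have h2 : deriv^[2] (phi β) x = phiDD β x := by
    simp only [Function.iterate_succ, Function.iterate_zero, Function.comp_apply, id_eq]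
    have h1 : deriv (phi β) = phiD β := funext fun t => (hasDerivAt_phi β t).deriv
    rw [h1]
    exact (hasDerivAt_phiD β x).deriv
  rw [h2]
  exact phiDD_neg hβ4 hx

/-- Strict antitonicity of the secant slope `g t = φ(t)/t` for `β ≤ β_c`. -/
lemma g_anti {β : ℝ} (hβ4 : Real.exp β ≤ 4) :
    StrictAntiOn (fun t => phi β t / t) (Set.Ioi (0:ℝ)) := by
  intro x hx y hy hxy
  have key := (phi_sconcave hβ4).secant_strict_mono (a := 0)
    Set.self_mem_Ici (Set.mem_Ici.2 (le_of_lt hx)) (Set.mem_Ici.2 (le_of_lt hy))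
    (ne_of_gt hx) (ne_of_gt hy) hxy
  simpa [phi_zero] using key

lemma phiD_zero (β : ℝ) : phiD β 0 = 2 / (Real.exp β + 2) := by
  have h2 : (0:ℝ) < Real.exp β + 2 := by have := Real.exp_pos β; linarith
  unfold phiD Dd
  rw [Real.cosh_zero]
  rw [div_eq_div_iff (by positivity) h2.ne']
  ring

lemma tendsto_g (β : ℝ) :
    Tendsto (fun t => phi β t / t) (nhdsWithin 0 (Set.Ioi 0))
      (nhds (2 / (Real.exp β + 2))) := by
  have h := hasDerivAt_iff_tendsto_slope.mp (hasDerivAt_phi β 0)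
  rw [phiD_zero] at h
  have hsub : nhdsWithin (0:ℝ) (Set.Ioi 0) ≤ nhdsWithin (0:ℝ) {(0:ℝ)}ᶜ :=
    nhdsWithin_mono _ (fun x hx => ne_of_gt hx)
  refine (h.mono_left hsub).congr (fun t => ?_)
  simp [slope_def_field, phi_zero]

lemma g_lt {β : ℝ} (hβ4 : Real.exp β ≤ 4) {t : ℝ} (ht : 0 < t) :
    phi β t / t < 2 / (Real.exp β + 2) := by
  have hle : ∀ s : ℝ, 0 < s → phi β s / s ≤ 2 / (Real.exp β + 2) := by
    intro s hs
    refine ge_of_tendsto (tendsto_g β) ?_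
    filter_upwards [Ioo_mem_nhdsGT_of_mem ⟨le_refl (0:ℝ), hs⟩] with u hu
    exact (g_anti hβ4 hu.1 hs hu.2).le
  have h1 : phi β t / t < phi β (t/2) / (t/2) :=
    g_anti hβ4 (Set.mem_Ioi.2 (half_pos ht)) (Set.mem_Ioi.2 ht) (half_lt_self ht)
  exact lt_of_lt_of_le h1 (hle _ (half_pos ht))

lemma root_exists {β : ℝ} (hβ4 : Real.exp β ≤ 4) {y : ℝ} (hy0 : 0 < y)
    (hyL : y < 2 / (Real.exp β + 2)) : ∃ t : ℝ, 0 < t ∧ phi β t / t = y := by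
  set T := max 1 (2 / y) with hTdef
  have hT : (0:ℝ) < T := lt_of_lt_of_le one_pos (le_max_left _ _)
  have hgT : phi β T / T < y := by
    have h1 : phi β T / T < 1 / T := by
      rw [div_lt_div_iff₀ hT hT]
      nlinarith [phi_lt_one β T]
    have h2 : 1 / T ≤ y / 2 := by
      have := one_div_le_one_div_of_le (by positivity : (0:ℝ) < 2 / y) (le_max_right 1 (2/y))
      rwa [one_div_div] at this
    linarith [half_lt_self hy0]
  have hev1 : ∀ᶠ s in nhdsWithin (0:ℝ) (Set.Ioi 0), y < phi β s / s :=
    (tendsto_g β).eventually_const_lt hyL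
  have hev2 : ∀ᶠ s in nhdsWithin (0:ℝ) (Set.Ioi 0), s ∈ Set.Ioo 0 T :=
    Ioo_mem_nhdsGT_of_mem ⟨le_refl (0:ℝ), hT⟩
  obtain ⟨s, hys, hs⟩ := (hev1.and hev2).exists
  have hsT : s ≤ T := hs.2.le
  have hcont : ContinuousOn (fun t => phi β t / t) (Set.Icc s T) := by
    intro x hx
    have hx0 : x ≠ 0 := ne_of_gt (lt_of_lt_of_le hs.1 hx.1)
    exact (((continuous_phi β).continuousAt).div continuousAt_id hx0).continuousWithinAt
  have hmem : y ∈ Set.Icc (phi β T / T) (phi β s / s) := ⟨hgT.le, hys.le⟩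
  obtain ⟨t, htmem, hty⟩ := intermediate_value_Icc' hsT hcont hmem
  exact ⟨t, lt_of_lt_of_le hs.1 htmem.1, hty⟩

lemma hasDerivAt_GBC (β K z : ℝ) :
    HasDerivAt (GBC β K) (2 * β * K * (z - phi β (2 * β * K * z))) z := by
  have h1 : HasDerivAt (fun w : ℝ => β * K * w ^ 2) (β * K * (2 * z ^ 1)) z := by
    simpa using (hasDerivAt_pow 2 z).const_mul (β * K)
  have hin : HasDerivAt (fun w : ℝ => 2 * β * K * w) (2 * β * K) z := by
    simpa using (hasDerivAt_id z).const_mul (2 * β * K)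
  have h2 : HasDerivAt (fun w : ℝ => cBC β (2 * β * K * w))
      (phi β (2 * β * K * z) * (2 * β * K)) z := by
    have := (hasDerivAt_cBC β (2 * β * K * z)).comp z hin
    exact this
  have h3 := h1.sub h2
  have h4 : (fun w : ℝ => β * K * w ^ 2 - cBC β (2 * β * K * w)) = GBC β K := rfl
  change HasDerivAt (GBC β K) _ z at h3
  exact h3.congr_deriv (by ring)

lemma deriv_GBC (β K z : ℝ) :
    deriv (GBC β K) z = 2 * β * K * (z - phi β (2 * β * K * z)) :=
  (hasDerivAt_GBC β K z).deriv

lemma continuous_GBC (β K : ℝ) : Continuous (GBC β K) :=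
  Differentiable.continuous (fun z => (hasDerivAt_GBC β K z).differentiableAt)

lemma GBC_even (β K z : ℝ) : GBC β K (-z) = GBC β K z := by
  unfold GBC
  rw [show 2 * β * K * -z = -(2 * β * K * z) by ring, cBC_neg, neg_sq]

lemma GBC_abs (β K w : ℝ) : GBC β K |w| = GBC β K w := by
  rcases abs_cases w with ⟨h, _⟩ | ⟨h, _⟩
  · rw [h]
  · rw [h]; exact GBC_even β K w

end BCaux

/-- **Second-order phase transition for the mean-field Blume–Capel model**
(Theorem 3.6 of Ellis–Otto–Touchette).  For `0 < β ≤ β_c = log 4`: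
(a) for `0 < K ≤ K_c^{(2)}(β)` the set of global minimum points of `G_{β,K}` is `{0}`;
(b) for `K > K_c^{(2)}(β)` it equals `{z(β,K), −z(β,K)}` with `z(β,K) > 0`;
(c) `K ↦ z(β,K)` is positive, increasing and continuous on `(K_c^{(2)}(β), ∞)` and
tends to `0` as `K → K_c^{(2)}(β)⁺` (continuous bifurcation). -/
theorem blume_capel_second_order (β : ℝ) (hβ0 : 0 < β) (hβc : β ≤ Real.log 4) :
    (∀ K : ℝ, 0 < K → K ≤ Kc2 β →
      {z : ℝ | ∀ w : ℝ, GBC β K z ≤ GBC β K w} = {0}) ∧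
    ∃ zmin : ℝ → ℝ,
      (∀ K : ℝ, Kc2 β < K →
        0 < zmin K ∧
        {z : ℝ | ∀ w : ℝ, GBC β K z ≤ GBC β K w} = {zmin K, -(zmin K)}) ∧
      StrictMonoOn zmin (Set.Ioi (Kc2 β)) ∧
      ContinuousOn zmin (Set.Ioi (Kc2 β)) ∧
      Tendsto zmin (nhdsWithin (Kc2 β) (Set.Ioi (Kc2 β))) (nhds 0) := by
  have hβ4 : Real.exp β ≤ 4 := by
    calc Real.exp β ≤ Real.exp (Real.log 4) := Real.exp_le_exp.2 hβc
    _ = 4 := Real.exp_log (by norm_num)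
  have ha : (0:ℝ) < Real.exp β := Real.exp_pos β
  have ha2 : (0:ℝ) < Real.exp β + 2 := by linarith
  have hKc : 0 < Kc2 β := by unfold Kc2; positivity
  constructor
  · -- Part (a)
    intro K hK0 hK
    have hmono : StrictMonoOn (GBC β K) (Set.Ici 0) := by
      apply strictMonoOn_of_deriv_pos (convex_Ici 0) (BCaux.continuous_GBC β K).continuousOn
      intro z hz
      rw [interior_Ici] at hz
      rw [BCaux.deriv_GBC]
      have hz0 : (0:ℝ) < z := hz
      have hbk : (0:ℝ) < 2 * β * K := by positivity
      have hu : (0:ℝ) < 2 * β * K * z := by positivity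
      have hglt := BCaux.g_lt hβ4 hu
      have hKa : K * (4 * β) ≤ Real.exp β + 2 := (le_div_iff₀ (by positivity)).mp hK
      have hphi : BCaux.phi β (2*β*K*z) * (Real.exp β + 2) < 2 * (2*β*K*z) := by
        rw [div_lt_div_iff₀ hu ha2] at hglt
        linarith
      have hphiz : BCaux.phi β (2*β*K*z) < z := by
        have h2 : 2 * (2*β*K*z) ≤ z * (Real.exp β + 2) := by nlinarith
        exact (mul_lt_mul_iff_left₀ ha2).mp (by linarith)
      exact mul_pos hbk (sub_pos.2 hphiz)
    ext z
    simp only [Set.mem_setOf_eq, Set.mem_singleton_iff]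
    constructor
    · intro hz
      by_contra hz0
      have h1 : GBC β K 0 < GBC β K |z| :=
        hmono Set.self_mem_Ici (Set.mem_Ici.2 (abs_nonneg z)) (abs_pos.2 hz0)
      rw [BCaux.GBC_abs] at h1
      exact absurd (hz 0) (not_le.2 h1)
    · rintro rfl
      intro w
      have h1 : GBC β K 0 ≤ GBC β K |w| :=
        hmono.monotoneOn Set.self_mem_Ici (Set.mem_Ici.2 (abs_nonneg w)) (abs_nonneg w)
      rwa [BCaux.GBC_abs] at h1
  · -- Parts (b), (c)
    have h2bKc : 2 * β * Kc2 β = (Real.exp β + 2) / 2 := by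
      unfold Kc2; field_simp; ring
    have hL : 1 / (2 * β * Kc2 β) = 2 / (Real.exp β + 2) := by
      rw [h2bKc, one_div_div]
    have hylt : ∀ K : ℝ, Kc2 β < K → 1/(2*β*K) < 2/(Real.exp β + 2) := by
      intro K hK
      rw [← hL]
      apply one_div_lt_one_div_of_lt (by positivity)
      nlinarith
    have hexist : ∀ K : ℝ, ∃ t : ℝ, Kc2 β < K →
        (0 < t ∧ BCaux.phi β t / t = 1/(2*β*K)) := by
      intro K
      by_cases hK : Kc2 β < K
      · have hK0 : 0 < K := lt_trans hKc hK
        obtain ⟨t, ht, hgt⟩ := BCaux.root_exists hβ4 (y := 1/(2*β*K))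
          (by positivity) (hylt K hK)
        exact ⟨t, fun _ => ⟨ht, hgt⟩⟩
      · exact ⟨1, fun h => absurd h hK⟩
    choose tK htK using hexist
    -- continuity of tK
    have htKcont : ContinuousOn tK (Set.Ioi (Kc2 β)) := by
      intro K0 hK0mem
      have hK0mem' : Kc2 β < K0 := hK0mem
      have hK00 : 0 < K0 := lt_trans hKc hK0mem'
      have ht0 : 0 < tK K0 := (htK K0 hK0mem').1
      have hg0 : BCaux.phi β (tK K0) / tK K0 = 1/(2*β*K0) := (htK K0 hK0mem').2
      have hy : Tendsto (fun K : ℝ => 1/(2*β*K)) (nhdsWithin K0 (Set.Ioi (Kc2 β)))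
          (nhds (1/(2*β*K0))) := by
        apply Tendsto.mono_left _ nhdsWithin_le_nhds
        exact (ContinuousAt.div continuousAt_const
          ((continuous_const.mul continuous_id).continuousAt)
          (by positivity : (0:ℝ) < 2*β*K0).ne').tendsto
      show Tendsto tK (nhdsWithin K0 (Set.Ioi (Kc2 β))) (nhds (tK K0))
      refine tendsto_order.2 ⟨?_, ?_⟩
      · intro b hb
        have hb' : max b (tK K0 / 2) < tK K0 := max_lt hb (half_lt_self ht0)
        have hb'0 : 0 < max b (tK K0 / 2) := lt_of_lt_of_le (half_pos ht0) (le_max_right _ _)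
        have hgb : 1/(2*β*K0) < BCaux.phi β (max b (tK K0/2)) / (max b (tK K0/2)) := by
          rw [← hg0]
          exact BCaux.g_anti hβ4 (Set.mem_Ioi.2 hb'0) (Set.mem_Ioi.2 ht0) hb'
        filter_upwards [hy.eventually_lt_const hgb, self_mem_nhdsWithin] with K hKlt hKmem
        have hKmem' : Kc2 β < K := hKmem
        have hthis : BCaux.phi β (tK K) / tK K
            < BCaux.phi β (max b (tK K0/2)) / (max b (tK K0/2)) := by
          rw [(htK K hKmem').2]; exact hKlt
        have hlt := ((BCaux.g_anti hβ4).lt_iff_gt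
          (Set.mem_Ioi.2 (htK K hKmem').1) (Set.mem_Ioi.2 hb'0)).mp hthis
        exact lt_of_le_of_lt (le_max_left _ _) hlt
      · intro b hb
        have hb' : tK K0 < min b (tK K0 + 1) := lt_min hb (lt_add_one _)
        have hb'0 : 0 < min b (tK K0 + 1) := lt_trans ht0 hb'
        have hgb : BCaux.phi β (min b (tK K0 + 1)) / (min b (tK K0 + 1)) < 1/(2*β*K0) := by
          rw [← hg0]
          exact BCaux.g_anti hβ4 (Set.mem_Ioi.2 ht0) (Set.mem_Ioi.2 hb'0) hb'
        filter_upwards [hy.eventually_const_lt hgb, self_mem_nhdsWithin] with K hKlt hKmem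
        have hKmem' : Kc2 β < K := hKmem
        have hthis : BCaux.phi β (min b (tK K0 + 1)) / (min b (tK K0 + 1))
            < BCaux.phi β (tK K) / tK K := by
          rw [(htK K hKmem').2]; exact hKlt
        have hlt := ((BCaux.g_anti hβ4).lt_iff_gt
          (Set.mem_Ioi.2 hb'0) (Set.mem_Ioi.2 (htK K hKmem').1)).mp hthis
        exact lt_of_lt_of_le hlt (min_le_left _ _)
    -- limit of tK at Kc2
    have htKlim : Tendsto tK (nhdsWithin (Kc2 β) (Set.Ioi (Kc2 β))) (nhds 0) := by
      refine tendsto_order.2 ⟨?_, ?_⟩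
      · intro b hb
        filter_upwards [self_mem_nhdsWithin] with K hK
        exact lt_trans hb (htK K hK).1
      · intro b hb
        have hb'0 : 0 < min b 1 := lt_min hb one_pos
        have hgb : BCaux.phi β (min b 1) / (min b 1) < 2/(Real.exp β + 2) :=
          BCaux.g_lt hβ4 hb'0
        have hyc : Tendsto (fun K : ℝ => 1/(2*β*K))
            (nhdsWithin (Kc2 β) (Set.Ioi (Kc2 β))) (nhds (2/(Real.exp β + 2))) := by
          rw [← hL]
          apply Tendsto.mono_left _ nhdsWithin_le_nhds
          exact (ContinuousAt.div continuousAt_const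
            ((continuous_const.mul continuous_id).continuousAt)
            (by positivity : (0:ℝ) < 2*β*Kc2 β).ne').tendsto
        filter_upwards [hyc.eventually_const_lt hgb, self_mem_nhdsWithin] with K hKlt hKmem
        have hKmem' : Kc2 β < K := hKmem
        have hthis : BCaux.phi β (min b 1) / (min b 1) < BCaux.phi β (tK K) / tK K := by
          rw [(htK K hKmem').2]; exact hKlt
        have hlt := ((BCaux.g_anti hβ4).lt_iff_gt
          (Set.mem_Ioi.2 hb'0) (Set.mem_Ioi.2 (htK K hKmem').1)).mp hthis
        exact lt_of_lt_of_le hlt (min_le_left _ _)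
    refine ⟨fun K => BCaux.phi β (tK K), ?_, ?_, ?_, ?_⟩
    · -- global minimizers for K > Kc2
      intro K hK
      have hK0 : 0 < K := lt_trans hKc hK
      have hbk : (0:ℝ) < 2 * β * K := by positivity
      have ht : 0 < tK K := (htK K hK).1
      have hg : BCaux.phi β (tK K) / tK K = 1/(2*β*K) := (htK K hK).2
      have hzm : 0 < BCaux.phi β (tK K) := BCaux.phi_pos β ht
      have hrel : 2 * β * K * BCaux.phi β (tK K) = tK K := by
        have := (div_eq_div_iff ht.ne' hbk.ne').mp hg
        linarith [this]
      have hderivneg : ∀ z ∈ Set.Ioo 0 (BCaux.phi β (tK K)), deriv (GBC β K) z < 0 := by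
        intro z hz
        rw [BCaux.deriv_GBC]
        have hz0 : 0 < z := hz.1
        have hu : 0 < 2*β*K*z := by positivity
        have hult : 2*β*K*z < tK K := by nlinarith [hz.2]
        have hgu : 1/(2*β*K) < BCaux.phi β (2*β*K*z) / (2*β*K*z) := by
          rw [← hg]
          exact BCaux.g_anti hβ4 (Set.mem_Ioi.2 hu) (Set.mem_Ioi.2 ht) hult
        have hzphi : z < BCaux.phi β (2*β*K*z) := by
          rw [lt_div_iff₀ hu] at hgu
          have heq : 1/(2*β*K) * (2*β*K*z) = z := by field_simp
          linarith [heq ▸ hgu]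
        exact mul_neg_of_pos_of_neg hbk (by linarith)
      have hderivpos : ∀ z ∈ Set.Ioi (BCaux.phi β (tK K)), 0 < deriv (GBC β K) z := by
        intro z hz
        rw [BCaux.deriv_GBC]
        have hz0 : 0 < z := lt_trans hzm hz
        have hu : 0 < 2*β*K*z := by positivity
        have hult : tK K < 2*β*K*z := by
          have : BCaux.phi β (tK K) < z := hz
          nlinarith
        have hgu : BCaux.phi β (2*β*K*z) / (2*β*K*z) < 1/(2*β*K) := by
          rw [← hg]
          exact BCaux.g_anti hβ4 (Set.mem_Ioi.2 ht) (Set.mem_Ioi.2 hu) hult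
        have hzphi : BCaux.phi β (2*β*K*z) < z := by
          rw [div_lt_iff₀ hu] at hgu
          have heq : 1/(2*β*K) * (2*β*K*z) = z := by field_simp
          linarith [heq ▸ hgu]
        exact mul_pos hbk (by linarith)
      have hanti : StrictAntiOn (GBC β K) (Set.Icc 0 (BCaux.phi β (tK K))) :=
        strictAntiOn_of_deriv_neg (convex_Icc _ _) (BCaux.continuous_GBC β K).continuousOn
          (fun z hz => by rw [interior_Icc] at hz; exact hderivneg z hz)
      have hmono : StrictMonoOn (GBC β K) (Set.Ici (BCaux.phi β (tK K))) :=
        strictMonoOn_of_deriv_pos (convex_Ici _) (BCaux.continuous_GBC β K).continuousOn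
          (fun z hz => by rw [interior_Ici] at hz; exact hderivpos z hz)
      have hminle : ∀ w, GBC β K (BCaux.phi β (tK K)) ≤ GBC β K w := by
        intro w
        rw [← BCaux.GBC_abs β K w]
        rcases le_or_gt |w| (BCaux.phi β (tK K)) with h | h
        · exact hanti.antitoneOn ⟨abs_nonneg w, h⟩ ⟨hzm.le, le_refl _⟩ h
        · exact hmono.monotoneOn (Set.mem_Ici.2 (le_refl _)) (Set.mem_Ici.2 h.le) h.le
      refine ⟨hzm, ?_⟩
      ext z
      simp only [Set.mem_setOf_eq, Set.mem_insert_iff, Set.mem_singleton_iff]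
      constructor
      · intro hz
        have h1 : GBC β K |z| ≤ GBC β K (BCaux.phi β (tK K)) := by
          rw [BCaux.GBC_abs]; exact hz _
        have h2 : |z| = BCaux.phi β (tK K) := by
          rcases lt_trichotomy |z| (BCaux.phi β (tK K)) with h | h | h
          · have := hanti ⟨abs_nonneg z, h.le⟩ ⟨hzm.le, le_refl _⟩ h
            linarith
          · exact h
          · have := hmono (Set.mem_Ici.2 (le_refl _)) (Set.mem_Ici.2 h.le) h
            linarith
        exact (abs_eq hzm.le).mp h2
      · rintro (rfl | rfl)
        · exact hminle
        · intro w
          rw [BCaux.GBC_even]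
          exact hminle w
    · -- strict monotonicity
      intro K1 h1 K2 h2 h12
      have h1' : Kc2 β < K1 := h1
      have h2' : Kc2 β < K2 := h2
      have hK10 : 0 < K1 := lt_trans hKc h1'
      have hK20 : 0 < K2 := lt_trans hKc h2'
      apply BCaux.phi_strictMono β
      have e1 := (htK K1 h1').2
      have e2 := (htK K2 h2').2
      have hy : 1/(2*β*K2) < 1/(2*β*K1) :=
        one_div_lt_one_div_of_lt (by positivity) (by nlinarith)
      by_contra hle
      push_neg at hle
      rcases eq_or_lt_of_le hle with heq | hlt
      · rw [heq] at e2
        rw [e2] at e1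
        linarith
      · have := BCaux.g_anti hβ4 (Set.mem_Ioi.2 (htK K2 h2').1)
          (Set.mem_Ioi.2 (htK K1 h1').1) hlt
        have this' : BCaux.phi β (tK K1) / tK K1 < BCaux.phi β (tK K2) / tK K2 := this
        rw [e1, e2] at this'
        linarith
    · -- continuity
      exact (BCaux.continuous_phi β).comp_continuousOn htKcont
    · -- limit at Kc2
      have := ((BCaux.continuous_phi β).tendsto 0).comp htKlim
      rw [BCaux.phi_zero] at this; exact this
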